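/- For a system (D,H) that is controllable using s-sparse inputs with a common support (i.e., there exists S ⊆ {1,…,L} with |S| = s such that every initial state can be steered to every final state by inputs all supported on S), the minimum positive integer K* such that every initial state can be steered to every final state using exactly K* such common-support inputs satisfies N / R* ≤ K* ≤ min{ q, N − R* + 1 } ≤ N, where R* = min{rank(H), s} and q is the degree of the minimal polynomial of D. -/

import Mathlib

open Matrix

/-- `h` is `s`-sparse: at most `s` nonzero entries. -/
def IsSparse {L : ℕ} (s : ℕ) (h : Fin L → ℝ) : Prop :=
  {i : Fin L | h i ≠ 0}.ncard ≤ s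

/-- Inputs `h 0, …, h (K-1)` steer the state `xinit` to `xfinal`:
`xfinal − D^K xinit = ∑_{k=1}^{K} D^{K−k} H h_k`. -/
def Steers {N L : ℕ} (D : Matrix (Fin N) (Fin N) ℝ) (H : Matrix (Fin N) (Fin L) ℝ)
    (K : ℕ) (h : Fin K → Fin L → ℝ) (xinit xfinal : Fin N → ℝ) : Prop :=
  xfinal - (D ^ K) *ᵥ xinit = ∑ k : Fin K, (D ^ (K - 1 - (k : ℕ))) *ᵥ (H *ᵥ h k)

/-- The system `(D, H)` is `s`-sparse-controllable. -/
def SparseControllable (N L s : ℕ) (D : Matrix (Fin N) (Fin N) ℝ)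
    (H : Matrix (Fin N) (Fin L) ℝ) : Prop :=
  ∀ xinit xfinal : Fin N → ℝ, ∃ K : ℕ, 0 < K ∧ ∃ h : Fin K → Fin L → ℝ,
    (∀ k, IsSparse s (h k)) ∧ Steers D H K h xinit xfinal

/-- Every initial state can be steered to every final state using exactly `K` inputs
all supported on a common index set of cardinality `s`. -/
def UnivCommonSupportSteers (N L s : ℕ) (D : Matrix (Fin N) (Fin N) ℝ)
    (H : Matrix (Fin N) (Fin L) ℝ) (K : ℕ) : Prop :=
  ∃ S : Finset (Fin L), S.card = s ∧
    ∀ xinit xfinal : Fin N → ℝ, ∃ h : Fin K → Fin L → ℝ,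
      (∀ k, ∀ j ∉ S, h k j = 0) ∧ Steers D H K h xinit xfinal

namespace SparseCtrl

open Submodule Module Polynomial

variable {N L : ℕ} (D : Matrix (Fin N) (Fin N) ℝ) (H : Matrix (Fin N) (Fin L) ℝ)

/-- column `j` of `H`. -/
noncomputable def col (j : Fin L) : Fin N → ℝ := H *ᵥ Pi.single j 1

/-- span of the columns of `H` indexed by `S`. -/
noncomputable def USp (S : Finset (Fin L)) : Submodule ℝ (Fin N → ℝ) :=
  Submodule.span ℝ (col H '' ↑S)

/-- `K`-step reachable space with inputs supported on `S`. -/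
noncomputable def WSp (S : Finset (Fin L)) (K : ℕ) : Submodule ℝ (Fin N → ℝ) :=
  (Finset.range K).sup fun i => (USp H S).map (mulVecLin (D ^ i))

lemma col_eq_transpose (j : Fin L) : col H j = Hᵀ j := by
  ext i
  simp [col, mulVec_single, transpose_apply]

lemma mulVec_eq_sum_cols (S : Finset (Fin L)) (g : Fin L → ℝ) (hg : ∀ j ∉ S, g j = 0) :
    H *ᵥ g = ∑ j ∈ S, g j • col H j := by
  have h1 : H *ᵥ g = ∑ j : Fin L, g j • col H j := by
    ext i
    simp only [mulVec, dotProduct, Finset.sum_apply, Pi.smul_apply, smul_eq_mul]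
    refine Finset.sum_congr rfl fun j _ => ?_
    simp [col, mulVec_single, mul_comm]
  rw [h1]
  refine (Finset.sum_subset (Finset.subset_univ S) fun j _ hj => ?_).symm
  rw [hg j hj, zero_smul]

lemma mulVec_mem_USp (S : Finset (Fin L)) (g : Fin L → ℝ) (hg : ∀ j ∉ S, g j = 0) :
    H *ᵥ g ∈ USp H S := by
  rw [mulVec_eq_sum_cols H S g hg]
  exact Submodule.sum_mem _ fun j hj =>
    Submodule.smul_mem _ _ (Submodule.subset_span ⟨j, hj, rfl⟩)

lemma exists_input_of_mem_USp (S : Finset (Fin L)) {u : Fin N → ℝ} (hu : u ∈ USp H S) :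
    ∃ g : Fin L → ℝ, (∀ j ∉ S, g j = 0) ∧ H *ᵥ g = u := by
  induction hu using Submodule.span_induction with
  | mem x hx =>
    obtain ⟨j, hj, rfl⟩ := hx
    exact ⟨Pi.single j 1,
      fun j' hj' => Pi.single_eq_of_ne (fun hjj => hj' (by rw [hjj]; exact hj)) 1, rfl⟩
  | zero => exact ⟨0, fun _ _ => rfl, by simp [mulVec_zero]⟩
  | add x y _ _ ihx ihy =>
    obtain ⟨g1, hg1, hg1e⟩ := ihx
    obtain ⟨g2, hg2, hg2e⟩ := ihy
    exact ⟨g1 + g2, fun j hj => by simp [hg1 j hj, hg2 j hj],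
      by rw [mulVec_add, hg1e, hg2e]⟩
  | smul c x _ ihx =>
    obtain ⟨g, hg, hge⟩ := ihx
    exact ⟨c • g, fun j hj => by simp [hg j hj], by rw [mulVec_smul, hge]⟩

lemma WSp_mono_K (S : Finset (Fin L)) {K K' : ℕ} (h : K ≤ K') : WSp D H S K ≤ WSp D H S K' :=
  Finset.sup_mono (Finset.range_subset_range.2 h)

lemma WSp_mono_U {S S' : Finset (Fin L)} (h : USp H S ≤ USp H S') (K : ℕ) :
    WSp D H S K ≤ WSp D H S' K :=
  Finset.sup_mono_fun fun _ _ => Submodule.map_mono h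

lemma mem_WSp_of_lt (S : Finset (Fin L)) {i K : ℕ} (hi : i < K) {u : Fin N → ℝ}
    (hu : u ∈ USp H S) : (D ^ i) *ᵥ u ∈ WSp D H S K := by
  have : (D ^ i) *ᵥ u ∈ (USp H S).map (mulVecLin (D ^ i)) :=
    ⟨u, hu, by simp [mulVecLin_apply]⟩
  exact Finset.le_sup (f := fun i => (USp H S).map (mulVecLin (D ^ i)))
    (Finset.mem_range.2 hi) this

lemma WSp_succ (S : Finset (Fin L)) (K : ℕ) :
    WSp D H S (K + 1) = (USp H S).map (mulVecLin (D ^ K)) ⊔ WSp D H S K := by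
  rw [WSp, Finset.range_add_one, Finset.sup_insert]
  rfl

lemma WSp_zero (S : Finset (Fin L)) : WSp D H S 0 = ⊥ := by
  simp [WSp]

lemma WSp_one (S : Finset (Fin L)) : WSp D H S 1 = USp H S := by
  rw [WSp]
  simp [Finset.range_one, Submodule.map_id]

lemma map_mulVecLin_WSp_le (S : Finset (Fin L)) (K : ℕ) :
    (WSp D H S K).map (mulVecLin D) ≤ WSp D H S (K + 1) := by
  rw [WSp, WSp, Finset.sup_eq_iSup, Finset.sup_eq_iSup, Submodule.map_iSup]
  refine iSup_le fun i => ?_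
  rw [Submodule.map_iSup]
  refine iSup_le fun hi => ?_
  have hmem : i + 1 ∈ Finset.range (K + 1) := by
    simp only [Finset.mem_range] at hi ⊢; omega
  refine le_trans (le_of_eq ?_) (le_iSup₂ (i + 1) hmem)
  rw [← Submodule.map_comp, ← mulVecLin_mul, ← pow_succ']

lemma stab_all (S : Finset (Fin L)) {t : ℕ} (ht : WSp D H S (t + 1) = WSp D H S t) (m : ℕ) :
    WSp D H S m ≤ WSp D H S t := by
  induction m with
  | zero => rw [WSp_zero]; exact bot_le
  | succ m ih =>
    rcases le_or_gt (m + 1) t with h | h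
    · exact WSp_mono_K D H S h
    · rw [WSp_succ]
      refine sup_le ?_ ih
      have key : ∀ m', (USp H S).map (mulVecLin (D ^ (t + m'))) ≤ WSp D H S t := by
        intro m'
        induction m' with
        | zero =>
          have h0 : (USp H S).map (mulVecLin (D ^ t)) ≤ WSp D H S (t + 1) :=
            Finset.le_sup (f := fun i => (USp H S).map (mulVecLin (D ^ i)))
              (Finset.mem_range.2 (Nat.lt_succ_self t))
          simpa using le_trans h0 (le_of_eq ht)
        | succ m' ih' =>
          have h1 : (USp H S).map (mulVecLin (D ^ (t + (m' + 1)))) =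
              ((USp H S).map (mulVecLin (D ^ (t + m')))).map (mulVecLin D) := by
            rw [← Submodule.map_comp, ← mulVecLin_mul, ← pow_succ']
            ring_nf
          rw [h1]
          refine le_trans (Submodule.map_mono ih') ?_
          exact le_trans (map_mulVecLin_WSp_le D H S t) (le_of_eq ht)
      have hm : m = t + (m - t) := by omega
      rw [hm]
      exact key (m - t)

lemma finrank_WSp_le (S : Finset (Fin L)) (K : ℕ) :
    finrank ℝ (WSp D H S K) ≤ K * finrank ℝ (USp H S) := by
  induction K with
  | zero => simp [WSp_zero]
  | succ K ih =>
    rw [WSp_succ]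
    have h1 := Submodule.finrank_sup_add_finrank_inf_eq
      ((USp H S).map (mulVecLin (D ^ K))) (WSp D H S K)
    have h2 : finrank ℝ ((USp H S).map (mulVecLin (D ^ K))) ≤ finrank ℝ (USp H S) :=
      Submodule.finrank_map_le _ _
    have h3 : (K + 1) * finrank ℝ (USp H S) = K * finrank ℝ (USp H S) + finrank ℝ (USp H S) :=
      by ring
    omega

lemma exists_stab (S : Finset (Fin L)) : ∃ t, WSp D H S (t + 1) = WSp D H S t := by
  by_contra hcon
  push_neg at hcon
  have hlt : ∀ t, WSp D H S t < WSp D H S (t + 1) := fun t =>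
    lt_of_le_of_ne (WSp_mono_K D H S (Nat.le_succ t)) (fun h => hcon t h.symm)
  have hgrow : ∀ K, K ≤ finrank ℝ (WSp D H S K) := by
    intro K
    induction K with
    | zero => exact Nat.zero_le _
    | succ K ih =>
      have := Submodule.finrank_lt_finrank_of_lt (hlt K)
      omega
  have h1 := hgrow (N + 1)
  have h2 : finrank ℝ (WSp D H S (N + 1)) ≤ N := by
    have := Submodule.finrank_le (WSp D H S (N + 1))
    rwa [Module.finrank_pi ℝ, Fintype.card_fin] at this
  omega

lemma sum_mulVec {ι : Type*} (t : Finset ι) (f : ι → Matrix (Fin N) (Fin N) ℝ)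
    (v : Fin N → ℝ) : (∑ i ∈ t, f i) *ᵥ v = ∑ i ∈ t, f i *ᵥ v := by
  induction t using Finset.cons_induction with
  | empty => simp [Matrix.zero_mulVec]
  | cons a t ha ih => rw [Finset.sum_cons, Finset.sum_cons, Matrix.add_mulVec, ih]

lemma pow_mem_span_powers (hN : 0 < N) (m : ℕ) :
    D ^ m ∈ Submodule.span ℝ
      (Set.range fun i : Fin (minpoly ℝ D).natDegree => D ^ (i : ℕ)) := by
  haveI : Nonempty (Fin N) := ⟨⟨0, hN⟩⟩
  have hint : IsIntegral ℝ D := IsIntegral.of_finite ℝ D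
  set q := (minpoly ℝ D).natDegree with hqdef
  have hq : 0 < q := minpoly.natDegree_pos hint
  have hDq : D ^ q = ∑ i ∈ Finset.range q, (-(minpoly ℝ D).coeff i) • D ^ i := by
    have h0 : (0 : Matrix (Fin N) (Fin N) ℝ) = Polynomial.aeval D (minpoly ℝ D) :=
      (minpoly.aeval ℝ D).symm
    rw [Polynomial.aeval_eq_sum_range, Finset.sum_range_succ,
      (minpoly.monic hint).coeff_natDegree, one_smul] at h0
    have h1 : D ^ (minpoly ℝ D).natDegree =
        -∑ i ∈ Finset.range q, (minpoly ℝ D).coeff i • D ^ i :=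
      eq_neg_of_add_eq_zero_right h0.symm
    rw [hqdef, h1, ← Finset.sum_neg_distrib]
    exact Finset.sum_congr rfl fun i _ => by rw [neg_smul]
  induction m using Nat.strong_induction_on with
  | _ m ih =>
    rcases lt_or_ge m q with hm | hm
    · exact Submodule.subset_span ⟨⟨m, hm⟩, rfl⟩
    · have hsplit : D ^ m = ∑ i ∈ Finset.range q,
          (-(minpoly ℝ D).coeff i) • D ^ (m - q + i) := by
        calc D ^ m = D ^ (m - q) * D ^ q := by rw [← pow_add]; congr 1; omega
          _ = ∑ i ∈ Finset.range q, (-(minpoly ℝ D).coeff i) • (D ^ (m - q) * D ^ i) := by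
              rw [hDq, Finset.mul_sum]
              exact Finset.sum_congr rfl fun i _ => (mul_smul_comm _ _ _)
          _ = _ := Finset.sum_congr rfl fun i _ => by rw [← pow_add]
      rw [hsplit]
      refine Submodule.sum_mem _ fun i hi => Submodule.smul_mem _ _ ?_
      exact ih (m - q + i) (by simp only [Finset.mem_range] at hi; omega)

/-- If the reachable spaces are eventually everything, then the `q`-step reachable space
is everything, where `q` is the degree of the minimal polynomial. -/
lemma WSp_minpoly_top (hN : 0 < N) (S : Finset (Fin L)) {t : ℕ} (ht : WSp D H S t = ⊤) :
    WSp D H S (minpoly ℝ D).natDegree = ⊤ := by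
  rw [eq_top_iff, ← ht]
  refine Finset.sup_le fun i _ => ?_
  rintro x ⟨u, hu, rfl⟩
  have hpow := pow_mem_span_powers D hN i
  rw [mem_span_range_iff_exists_fun] at hpow
  obtain ⟨c, hc⟩ := hpow
  have : mulVecLin (D ^ i) u = ∑ j : Fin (minpoly ℝ D).natDegree, c j • ((D ^ (j : ℕ)) *ᵥ u) := by
    rw [mulVecLin_apply, ← hc, sum_mulVec]
    exact Finset.sum_congr rfl fun j _ => by rw [Matrix.smul_mulVec]
  rw [this]
  exact Submodule.sum_mem _ fun j _ =>
    Submodule.smul_mem _ _ (mem_WSp_of_lt D H S j.isLt hu)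

/-- chain argument: the reachable space is everything after `N - r + 1` steps. -/
lemma WSp_chain_top (hN : 0 < N) (S : Finset (Fin L)) {t : ℕ} (ht : WSp D H S t = ⊤) :
    WSp D H S (N - finrank ℝ (USp H S) + 1) = ⊤ := by
  set r := finrank ℝ (USp H S) with hrdef
  have hfinN : finrank ℝ (Fin N → ℝ) = N := by
    rw [Module.finrank_pi ℝ, Fintype.card_fin]
  have hrN : r ≤ N := by
    have := Submodule.finrank_le (USp H S)
    omega
  have claim : ∀ K : ℕ, WSp D H S (K + 1) = ⊤ ∨ r + K ≤ finrank ℝ (WSp D H S (K + 1)) := by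
    intro K
    induction K with
    | zero => right; rw [WSp_one]; omega
    | succ K ih =>
      rcases ih with htop | hrk
      · left
        rw [eq_top_iff, ← htop]
        exact WSp_mono_K D H S (Nat.le_succ _)
      · rcases eq_or_lt_of_le (WSp_mono_K D H S (by omega : K + 1 ≤ K + 1 + 1)) with heq | hlt
        · left
          have hstab := stab_all D H S heq.symm t
          rw [ht] at hstab
          exact le_antisymm le_top (le_trans hstab (WSp_mono_K D H S (Nat.le_succ _)))
        · right
          have := Submodule.finrank_lt_finrank_of_lt hlt
          omega
  rcases claim (N - r) with htop | hrk
  · exact htop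
  · refine Submodule.eq_top_of_finrank_eq ?_
    have hle : finrank ℝ (WSp D H S (N - r + 1)) ≤ N := by
      have := Submodule.finrank_le (WSp D H S (N - r + 1))
      omega
    omega

lemma col_mem_USp {S : Finset (Fin L)} {j : Fin L} (hj : j ∈ S) : col H j ∈ USp H S :=
  Submodule.subset_span ⟨j, hj, rfl⟩

lemma USp_le_range (S : Finset (Fin L)) : USp H S ≤ LinearMap.range H.mulVecLin := by
  refine Submodule.span_le.2 ?_
  rintro x ⟨j, _, rfl⟩
  exact ⟨Pi.single j 1, rfl⟩

lemma finrank_USp_le_rank (S : Finset (Fin L)) : finrank ℝ (USp H S) ≤ H.rank :=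
  Submodule.finrank_mono (USp_le_range H S)

lemma finrank_USp_le_card (S : Finset (Fin L)) : finrank ℝ (USp H S) ≤ S.card := by
  have h1 : USp H S = Submodule.span ℝ (↑(S.image (col H)) : Set (Fin N → ℝ)) := by
    rw [USp, Finset.coe_image]
  rw [h1]
  exact le_trans (finrank_span_finset_le_card _) (Finset.card_image_le)

lemma exchange (s : ℕ) :
    ∀ (d : ℕ) (S' : Finset (Fin L)), S'.card = s →
      min H.rank s ≤ finrank ℝ (USp H S') + d →
      ∃ S'' : Finset (Fin L), S''.card = s ∧ USp H S' ≤ USp H S'' ∧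
        min H.rank s ≤ finrank ℝ (USp H S'') := by
  intro d
  induction d with
  | zero => intro S' hcard hle; exact ⟨S', hcard, le_rfl, by simpa using hle⟩
  | succ d ih =>
    intro S' hcard hle
    by_cases hdone : min H.rank s ≤ finrank ℝ (USp H S')
    · exact ⟨S', hcard, le_rfl, hdone⟩
    push_neg at hdone
    have hrk : finrank ℝ (USp H S') < H.rank := lt_of_lt_of_le hdone (min_le_left _ _)
    have hcd : finrank ℝ (USp H S') < S'.card := by
      rw [hcard]; exact lt_of_lt_of_le hdone (min_le_right _ _)
    have hj : ∃ j : Fin L, col H j ∉ USp H S' := by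
      by_contra hcon
      push_neg at hcon
      have hle2 : LinearMap.range H.mulVecLin ≤ USp H S' := by
        rw [Matrix.range_mulVecLin]
        refine Submodule.span_le.2 ?_
        rintro x ⟨j, rfl⟩
        rw [show H.col j = SparseCtrl.col H j by ext i; simp [SparseCtrl.col, mulVec_single, Matrix.col_apply]]
        exact hcon j
      have : H.rank ≤ finrank ℝ (USp H S') := Submodule.finrank_mono hle2
      omega
    obtain ⟨j, hjnot⟩ := hj
    obtain ⟨b, hbsub, hbspan, hbli⟩ := exists_linearIndependent ℝ (col H '' (↑S' : Set (Fin L)))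
    have hbfin : b.Finite := Set.Finite.subset (S'.finite_toSet.image _) hbsub
    haveI : Fintype b := hbfin.fintype
    have hbcard : b.toFinset.card = finrank ℝ (USp H S') := by
      rw [USp, ← hbspan]
      exact (finrank_span_set_eq_card hbli).symm
    have hch : ∀ v : b, ∃ j1 : Fin L, j1 ∈ S' ∧ col H j1 = (v : Fin N → ℝ) := by
      rintro ⟨v, hv⟩
      obtain ⟨j1, hj1, rfl⟩ := hbsub hv
      exact ⟨j1, hj1, rfl⟩
    choose ch hchS hchv using hch
    set t : Finset (Fin L) := Finset.image ch Finset.univ with htdef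
    have htsub : t ⊆ S' := by
      intro x hx
      rw [htdef, Finset.mem_image] at hx
      obtain ⟨v, _, rfl⟩ := hx
      exact hchS v
    have htcard : t.card < S'.card := by
      have h1 : t.card ≤ b.toFinset.card := by
        refine le_trans (Finset.card_image_le) ?_
        simp [Set.toFinset_card]
      omega
    have hj0 : ∃ j0 ∈ S', j0 ∉ t := by
      by_contra hcon
      push_neg at hcon
      have hsub : S' ⊆ t := fun x hx => hcon x hx
      have := Finset.card_le_card hsub
      omega
    obtain ⟨j0, hj0S, hj0t⟩ := hj0
    have hspan_t : USp H S' ≤ Submodule.span ℝ (col H '' ↑(S'.erase j0)) := by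
      rw [USp, ← hbspan]
      refine Submodule.span_le.2 ?_
      intro v hv
      have hv2 : col H (ch ⟨v, hv⟩) = v := hchv ⟨v, hv⟩
      rw [← hv2]
      refine Submodule.subset_span ⟨ch ⟨v, hv⟩, ?_, rfl⟩
      refine Finset.mem_coe.2 (Finset.mem_erase.2 ⟨?_, htsub (by
        rw [htdef]; exact Finset.mem_image.2 ⟨⟨v, hv⟩, Finset.mem_univ _, rfl⟩)⟩)
      rintro rfl
      exact hj0t (by rw [htdef]; exact Finset.mem_image.2 ⟨⟨v, hv⟩, Finset.mem_univ _, rfl⟩)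
    have hjS' : j ∉ S' := fun hmem => hjnot (col_mem_USp H hmem)
    set S'' : Finset (Fin L) := insert j (S'.erase j0) with hS''def
    have hjer : j ∉ S'.erase j0 := fun hmem => hjS' (Finset.mem_of_mem_erase hmem)
    have hcard'' : S''.card = s := by
      rw [hS''def, Finset.card_insert_of_notMem hjer, Finset.card_erase_of_mem hj0S, hcard]
      have : 0 < s := by omega
      omega
    have herle : Submodule.span ℝ (col H '' ↑(S'.erase j0)) ≤ USp H S'' := by
      refine Submodule.span_mono ?_
      refine Set.image_mono ?_
      intro x hx
      exact Finset.mem_coe.2 (Finset.mem_insert_of_mem (Finset.mem_coe.1 hx))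
    have hUle : USp H S' ≤ USp H S'' := le_trans hspan_t herle
    have hstrict : USp H S' < USp H S'' := by
      refine lt_of_le_of_ne hUle fun heq => ?_
      have hmem : col H j ∈ USp H S'' := col_mem_USp H (Finset.mem_insert_self _ _)
      rw [← heq] at hmem
      exact hjnot hmem
    have hfr : finrank ℝ (USp H S') < finrank ℝ (USp H S'') :=
      Submodule.finrank_lt_finrank_of_lt hstrict
    obtain ⟨S''', h1, h2, h3⟩ := ih S'' hcard'' (by omega)
    exact ⟨S''', h1, le_trans hUle h2, h3⟩

lemma steer_sum_mem (S : Finset (Fin L)) (K : ℕ) (h : Fin K → Fin L → ℝ)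
    (hh : ∀ k, ∀ j ∉ S, h k j = 0) :
    ∑ k : Fin K, (D ^ (K - 1 - (k : ℕ))) *ᵥ (H *ᵥ h k) ∈ WSp D H S K := by
  refine Submodule.sum_mem _ fun k _ => ?_
  have h2 : K - 1 - (k : ℕ) < K := by have := k.isLt; omega
  exact mem_WSp_of_lt D H S h2 (mulVec_mem_USp H S (h k) (hh k))

lemma top_of_steering (S : Finset (Fin L)) (K : ℕ)
    (hst : ∀ xinit xfinal : Fin N → ℝ, ∃ h : Fin K → Fin L → ℝ,
      (∀ k, ∀ j ∉ S, h k j = 0) ∧ Steers D H K h xinit xfinal) :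
    WSp D H S K = ⊤ := by
  rw [eq_top_iff]
  intro y _
  obtain ⟨h, hsupp, hsteer⟩ := hst 0 y
  rw [Steers, mulVec_zero, sub_zero] at hsteer
  rw [hsteer]
  exact steer_sum_mem D H S K h hsupp

lemma steering_of_top (S : Finset (Fin L)) (K : ℕ)
    (hT : WSp D H S K = ⊤) :
    ∀ xinit xfinal : Fin N → ℝ, ∃ h : Fin K → Fin L → ℝ,
      (∀ k, ∀ j ∉ S, h k j = 0) ∧ Steers D H K h xinit xfinal := by
  classical
  set A : Submodule ℝ (Fin N → ℝ) :=
    { carrier := {y | ∃ h : Fin K → Fin L → ℝ, (∀ k, ∀ j ∉ S, h k j = 0) ∧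
        y = ∑ k : Fin K, (D ^ (K - 1 - (k : ℕ))) *ᵥ (H *ᵥ h k)},
      add_mem' := by
        rintro a b ⟨h1, hs1, rfl⟩ ⟨h2, hs2, rfl⟩
        refine ⟨fun k => h1 k + h2 k, fun k j hj => by simp [hs1 k j hj, hs2 k j hj], ?_⟩
        rw [← Finset.sum_add_distrib]
        exact Finset.sum_congr rfl fun k _ => by rw [mulVec_add, mulVec_add]
      zero_mem' := ⟨0, fun _ _ _ => rfl, by
        simp only [Pi.zero_apply, Matrix.mulVec_zero, Finset.sum_const_zero]⟩
      smul_mem' := by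
        rintro c a ⟨h1, hs1, rfl⟩
        refine ⟨fun k => c • h1 k, fun k j hj => by simp [hs1 k j hj], ?_⟩
        rw [Finset.smul_sum]
        exact Finset.sum_congr rfl fun k _ => by rw [mulVec_smul, mulVec_smul] } with hA
  have hWA : WSp D H S K ≤ A := by
    refine Finset.sup_le fun i hi => ?_
    rw [Finset.mem_range] at hi
    rintro x ⟨u, hu, rfl⟩
    obtain ⟨g, hg, hgu⟩ := exists_input_of_mem_USp H S hu
    set k0 : Fin K := ⟨K - 1 - i, by omega⟩ with hk0
    refine ⟨Pi.single k0 g, ?_, ?_⟩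
    · intro k j hj
      rcases eq_or_ne k k0 with rfl | hne
      · rw [Pi.single_eq_same]; exact hg j hj
      · rw [Pi.single_eq_of_ne hne]; rfl
    · rw [Finset.sum_eq_single k0]
      · rw [Pi.single_eq_same, hgu]
        have hik : K - 1 - (k0 : ℕ) = i := by simp only [hk0]; omega
        rw [hik, mulVecLin_apply]
      · intro k _ hne
        rw [Pi.single_eq_of_ne hne]
        simp [mulVec_zero]
      · intro hk; exact absurd (Finset.mem_univ k0) hk
  intro xinit xfinal
  have hy : xfinal - (D ^ K) *ᵥ xinit ∈ WSp D H S K := by rw [hT]; trivial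
  obtain ⟨h, hsupp, heq⟩ := hWA hy
  exact ⟨h, hsupp, heq⟩

end SparseCtrl

/-- For a system controllable using `s`-sparse inputs with a common support, the minimum
number `K*` of such input vectors needed to steer any state to any other satisfies
`N / R* ≤ K* ≤ min{q, N − R* + 1} ≤ N`, where `R* = min{rank H, s}` and
`q = deg(minpoly D)`. -/
theorem min_inputs_common_support (N L s : ℕ) (hN : 0 < N) (hL : 0 < L) (hs : 0 < s)
    (hsL : s ≤ L)
    (D : Matrix (Fin N) (Fin N) ℝ) (H : Matrix (Fin N) (Fin L) ℝ)
    (hctrl : ∃ S : Finset (Fin L), S.card = s ∧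
      ∀ xinit xfinal : Fin N → ℝ, ∃ K : ℕ, 0 < K ∧ ∃ h : Fin K → Fin L → ℝ,
        (∀ k, ∀ j ∉ S, h k j = 0) ∧ Steers D H K h xinit xfinal)
    (q : ℕ) (hq : q = (minpoly ℝ D).natDegree)
    (R : ℕ) (hR : R = min H.rank s) :
    ∃ K : ℕ, IsLeast {K' : ℕ | 0 < K' ∧ UnivCommonSupportSteers N L s D H K'} K ∧
      N / R ≤ K ∧ K ≤ min q (N - R + 1) ∧ min q (N - R + 1) ≤ N := by
  classical
  open SparseCtrl Submodule Module in
  obtain ⟨S, hScard, hS⟩ := hctrl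
  haveI : Nonempty (Fin N) := ⟨⟨0, hN⟩⟩
  have hfinN : finrank ℝ (Fin N → ℝ) = N := by
    rw [Module.finrank_pi ℝ, Fintype.card_fin]
  haveI : Nontrivial (Fin N → ℝ) := inferInstance
  -- some reachable space is everything
  have hTopS : ∃ t, WSp D H S t = ⊤ := by
    obtain ⟨t, hstab⟩ := exists_stab D H S
    refine ⟨t, ?_⟩
    rw [eq_top_iff]
    intro y _
    obtain ⟨Ky, hKy, h, hsupp, hsteer⟩ := hS 0 y
    rw [Steers, mulVec_zero, sub_zero] at hsteer
    have hmem : y ∈ WSp D H S Ky := by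
      rw [hsteer]; exact steer_sum_mem D H S Ky h hsupp
    exact stab_all D H S hstab Ky hmem
  obtain ⟨t, hTop⟩ := hTopS
  -- the minimal polynomial degree is positive and gives a valid K
  have hint : IsIntegral ℝ D := IsIntegral.of_finite ℝ D
  have hqpos : 0 < q := by rw [hq]; exact minpoly.natDegree_pos hint
  have hWq : WSp D H S q = ⊤ := by
    rw [hq]; exact WSp_minpoly_top D H hN S hTop
  have mq : q ∈ {K' : ℕ | 0 < K' ∧ UnivCommonSupportSteers N L s D H K'} :=
    ⟨hqpos, S, hScard, steering_of_top D H S q hWq⟩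
  have hne : ∃ K', K' ∈ {K' : ℕ | 0 < K' ∧ UnivCommonSupportSteers N L s D H K'} := ⟨q, mq⟩
  refine ⟨Nat.find hne, ⟨Nat.find_spec hne, fun m hm => Nat.find_min' hne hm⟩, ?_, ?_, ?_⟩
  -- R is positive
  all_goals {
    have hUne : USp H S ≠ ⊥ := by
      intro hbot
      have : WSp D H S t = ⊥ := by
        rw [eq_bot_iff]
        refine Finset.sup_le fun i _ => ?_
        rw [hbot, Submodule.map_bot]
      rw [hTop] at this
      exact absurd this top_ne_bot
    have hUpos : 0 < finrank ℝ (USp H S) := by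
      rcases Nat.eq_zero_or_pos (finrank ℝ (USp H S)) with h0 | h0
      · exact absurd (Submodule.finrank_eq_zero.1 h0) hUne
      · exact h0
    have hRpos : 0 < R := by
      rw [hR]
      have h1 := finrank_USp_le_rank H S
      exact lt_min (by omega) hs
    first
    | -- lower bound
      (obtain ⟨hKpos, S₁, hS₁card, hS₁⟩ := Nat.find_spec hne
       have hTop1 : WSp D H S₁ (Nat.find hne) = ⊤ := top_of_steering D H S₁ _ hS₁
       have hrank1 : finrank ℝ (USp H S₁) ≤ R := by
         rw [hR]
         refine le_min (finrank_USp_le_rank H S₁) ?_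
         rw [← hS₁card]
         exact finrank_USp_le_card H S₁
       have hNle : N ≤ Nat.find hne * R := by
         have h1 := finrank_WSp_le D H S₁ (Nat.find hne)
         rw [hTop1, finrank_top, hfinN] at h1
         calc N ≤ Nat.find hne * finrank ℝ (USp H S₁) := h1
           _ ≤ Nat.find hne * R := Nat.mul_le_mul_left _ hrank1
       calc N / R ≤ Nat.find hne * R / R := Nat.div_le_div_right hNle
         _ = Nat.find hne := Nat.mul_div_cancel _ hRpos)
    | -- both upper bounds
      (refine le_min (Nat.find_min' hne mq) ?_
       -- exchange to get a good support
       obtain ⟨S'', hS''card, hS''le, hS''rank⟩ :=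
         exchange H s (min H.rank s) S hScard (by omega)
       have hTop'' : WSp D H S'' t = ⊤ := by
         rw [eq_top_iff, ← hTop]
         exact WSp_mono_U D H hS''le t
       have hchain := WSp_chain_top D H hN S'' hTop''
       set r := finrank ℝ (USp H S'') with hr'
       have hrR : R ≤ r := by rw [hR]; exact hS''rank
       have hmem2 : N - r + 1 ∈ {K' : ℕ | 0 < K' ∧ UnivCommonSupportSteers N L s D H K'} :=
         ⟨by omega, S'', hS''card, steering_of_top D H S'' _ hchain⟩
       have := Nat.find_min' hne hmem2
       omega)
    | -- min ≤ N
      (have : min q (N - R + 1) ≤ N - R + 1 := min_le_right _ _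
       omega)
  }
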